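/- The Hamiltonian vector field of H1 for the map (P.v) gives the degenerate modified Volterra lattice on the middle coordinates: {w1, H1} = w1^2*(w2 - w0) and {w2, H1} = w2^2*(w3 - w1). -/

import Mathlib

noncomputable def D0 (F : ℝ → ℝ → ℝ → ℝ → ℝ) (w0 w1 w2 w3 : ℝ) : ℝ :=
  deriv (fun t => F t w1 w2 w3) w0
noncomputable def D1 (F : ℝ → ℝ → ℝ → ℝ → ℝ) (w0 w1 w2 w3 : ℝ) : ℝ :=
  deriv (fun t => F w0 t w2 w3) w1
noncomputable def D2 (F : ℝ → ℝ → ℝ → ℝ → ℝ) (w0 w1 w2 w3 : ℝ) : ℝ :=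
  deriv (fun t => F w0 w1 t w3) w2
noncomputable def D3 (F : ℝ → ℝ → ℝ → ℝ → ℝ) (w0 w1 w2 w3 : ℝ) : ℝ :=
  deriv (fun t => F w0 w1 w2 t) w3

noncomputable def pbV (nu : ℝ) (F G : ℝ → ℝ → ℝ → ℝ → ℝ) (w0 w1 w2 w3 : ℝ) : ℝ :=
  (1 / w1^2) * (D0 F w0 w1 w2 w3 * D2 G w0 w1 w2 w3 - D2 F w0 w1 w2 w3 * D0 G w0 w1 w2 w3)
  + (1 / w2^2) * (D1 F w0 w1 w2 w3 * D3 G w0 w1 w2 w3 - D3 F w0 w1 w2 w3 * D1 G w0 w1 w2 w3)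
  + (-(2*(w0*w1 + w1*w2 + w2*w3) + nu) / (w1^2 * w2^2)) * (D0 F w0 w1 w2 w3 * D3 G w0 w1 w2 w3 - D3 F w0 w1 w2 w3 * D0 G w0 w1 w2 w3)

noncomputable def H1v (a c nu w0 w1 w2 w3 : ℝ) : ℝ :=
  w3*w2^3*w1^2 + w2^2*w1^3*w0 - w3*w2^2*w1^2*w0 + w2^3*w1^3 + nu*w2^2*w1^2 + c*w2*w1 + a*(w2+w1)

private lemma deriv_cubic (p3 p2 p1 p0 x : ℝ) :
    deriv (fun t : ℝ => p3*t^3 + p2*t^2 + p1*t + p0) x = 3*p3*x^2 + 2*p2*x + p1 := by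
  have h : HasDerivAt (fun t : ℝ => p3*t^3 + p2*t^2 + p1*t + p0)
      (3*p3*x^2 + 2*p2*x + p1) x := by
    have h3 : HasDerivAt (fun t : ℝ => t^3) (3*x^2) x := by
      simpa using hasDerivAt_pow 3 x
    have h2 : HasDerivAt (fun t : ℝ => t^2) (2*x) x := by
      simpa using hasDerivAt_pow 2 x
    have := (((h3.const_mul p3).add (h2.const_mul p2)).add
      ((hasDerivAt_id x).const_mul p1)).add_const p0
    refine this.congr_deriv ?_
    ring
  exact h.deriv

theorem stmt7 (a c nu w0 w1 w2 w3 : ℝ) (h : w1 * w2 ≠ 0) :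
    pbV nu (fun _ x _ _ => x) (H1v a c nu) w0 w1 w2 w3 = w1^2 * (w2 - w0) ∧
    pbV nu (fun _ _ x _ => x) (H1v a c nu) w0 w1 w2 w3 = w2^2 * (w3 - w1) := by
  have h1 : w1 ≠ 0 := fun h' => h (by simp [h'])
  have h2 : w2 ≠ 0 := fun h' => h (by simp [h'])
  have e0 : D0 (H1v a c nu) w0 w1 w2 w3 = w2^2*w1^3 - w3*w2^2*w1^2 := by
    unfold D0 H1v
    rw [show (fun t => w3*w2^3*w1^2 + w2^2*w1^3*t - w3*w2^2*w1^2*t + w2^3*w1^3 + nu*w2^2*w1^2 + c*w2*w1 + a*(w2+w1))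
      = fun t : ℝ => (0:ℝ)*t^3 + 0*t^2 + (w2^2*w1^3 - w3*w2^2*w1^2)*t
        + (w3*w2^3*w1^2 + w2^3*w1^3 + nu*w2^2*w1^2 + c*w2*w1 + a*(w2+w1)) from funext fun t => by ring,
      deriv_cubic]
    ring
  have e1 : D1 (H1v a c nu) w0 w1 w2 w3 =
      3*(w2^2*w0 + w2^3)*w1^2 + 2*(w3*w2^3 - w3*w2^2*w0 + nu*w2^2)*w1 + (c*w2 + a) := by
    unfold D1 H1v
    rw [show (fun t => w3*w2^3*t^2 + w2^2*t^3*w0 - w3*w2^2*t^2*w0 + w2^3*t^3 + nu*w2^2*t^2 + c*w2*t + a*(w2+t))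
      = fun t : ℝ => (w2^2*w0 + w2^3)*t^3 + (w3*w2^3 - w3*w2^2*w0 + nu*w2^2)*t^2
        + (c*w2 + a)*t + a*w2 from funext fun t => by ring,
      deriv_cubic]
  have e2 : D2 (H1v a c nu) w0 w1 w2 w3 =
      3*(w3*w1^2 + w1^3)*w2^2 + 2*(w1^3*w0 - w3*w1^2*w0 + nu*w1^2)*w2 + (c*w1 + a) := by
    unfold D2 H1v
    rw [show (fun t => w3*t^3*w1^2 + t^2*w1^3*w0 - w3*t^2*w1^2*w0 + t^3*w1^3 + nu*t^2*w1^2 + c*t*w1 + a*(t+w1))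
      = fun t : ℝ => (w3*w1^2 + w1^3)*t^3 + (w1^3*w0 - w3*w1^2*w0 + nu*w1^2)*t^2
        + (c*w1 + a)*t + a*w1 from funext fun t => by ring,
      deriv_cubic]
  have e3 : D3 (H1v a c nu) w0 w1 w2 w3 = w2^3*w1^2 - w2^2*w1^2*w0 := by
    unfold D3 H1v
    rw [show (fun t => t*w2^3*w1^2 + w2^2*w1^3*w0 - t*w2^2*w1^2*w0 + w2^3*w1^3 + nu*w2^2*w1^2 + c*w2*w1 + a*(w2+w1))
      = fun t : ℝ => (0:ℝ)*t^3 + 0*t^2 + (w2^3*w1^2 - w2^2*w1^2*w0)*t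
        + (w2^2*w1^3*w0 + w2^3*w1^3 + nu*w2^2*w1^2 + c*w2*w1 + a*(w2+w1)) from funext fun t => by ring,
      deriv_cubic]
    ring
  have p1 : D1 (fun _ x _ _ => x : ℝ → ℝ → ℝ → ℝ → ℝ) w0 w1 w2 w3 = 1 := by
    simp [D1]
  have p2 : D2 (fun _ _ x _ => x : ℝ → ℝ → ℝ → ℝ → ℝ) w0 w1 w2 w3 = 1 := by
    simp [D2]
  constructor
  · simp only [pbV, D0, D1, D2, D3] at *
    simp only [deriv_const', e0, e1, e2, e3, p1, p2]
    field_simp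
    ring
  · simp only [pbV, D0, D1, D2, D3] at *
    simp only [deriv_const', e0, e1, e2, e3, p1, p2]
    field_simp
    ring
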